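/- Let $D:\mathbf{R}_+\to\mathbf{R}_+$ be measurable and quasi-concave in the sense that there is a constant $C\ge 1$ with $D(\lambda s + (1-\lambda) t) \ge C^{-1}(\lambda D(s) + (1-\lambda) D(t))$ for all $s,t\ge 0$, $\lambda\in[0,1]$, and suppose $D(t)/t\to 0$ as $t\to\infty$. Then there exist concave functions $D_1, D_2:\mathbf{R}_+\to\mathbf{R}_+$ and a constant $c\ge 1$ with $D_1 \le D \le D_2 \le c\, D_1$. -/

import Mathlib

open Filter Topology Set

theorem mulholland_sandwich
    (D : ℝ → ℝ) (hDmeas : Measurable D)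
    (hDnonneg : ∀ t ∈ Ici (0:ℝ), 0 ≤ D t)
    (C : ℝ) (hC : 1 ≤ C)
    (hquasi : ∀ s ∈ Ici (0:ℝ), ∀ t ∈ Ici (0:ℝ), ∀ lam ∈ Icc (0:ℝ) 1,
      C⁻¹ * (lam * D s + (1 - lam) * D t) ≤ D (lam * s + (1 - lam) * t))
    (hDslope : Tendsto (fun t => D t / t) atTop (𝓝 0)) :
    ∃ (D₁ D₂ : ℝ → ℝ) (c : ℝ), 1 ≤ c ∧
      ConcaveOn ℝ (Ici 0) D₁ ∧ ConcaveOn ℝ (Ici 0) D₂ ∧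
      (∀ t ∈ Ici (0:ℝ), 0 ≤ D₁ t) ∧ (∀ t ∈ Ici (0:ℝ), 0 ≤ D₂ t) ∧
      (∀ t ∈ Ici (0:ℝ), D₁ t ≤ D t ∧ D t ≤ D₂ t ∧ D₂ t ≤ c * D₁ t) := by
  have hC0 : (0:ℝ) < C := lt_of_lt_of_le one_pos hC
  -- cross inequality from quasi-concavity
  have cross : ∀ x u v : ℝ, 0 ≤ u → u < x → x < v →
      (D v - C * D x) * (x - u) ≤ (C * D x - D u) * (v - x) := by
    intro x u v hu hux hxv
    have hvu : (0:ℝ) < v - u := by linarith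
    have hlam : (x - u)/(v - u) ∈ Icc (0:ℝ) 1 := by
      constructor
      · apply div_nonneg <;> linarith
      · rw [div_le_one hvu]; linarith
    have hv0 : v ∈ Ici (0:ℝ) := by simp only [mem_Ici]; linarith
    have hu0 : u ∈ Ici (0:ℝ) := hu
    have h := hquasi v hv0 u hu0 _ hlam
    have hxeq : (x - u)/(v - u) * v + (1 - (x - u)/(v - u)) * u = x := by
      field_simp
      ring
    rw [hxeq, inv_mul_le_iff₀ hC0] at h
    have key : (x - u) * D v + (v - x) * D u ≤ C * D x * (v - u) := by
      have h' := mul_le_mul_of_nonneg_right h hvu.le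
      calc (x - u) * D v + (v - x) * D u
          = ((x - u)/(v - u) * D v + (1 - (x - u)/(v - u)) * D u) * (v - u) := by
            field_simp
            ring
        _ ≤ C * D x * (v - u) := h'
    nlinarith [key]
  -- supporting line at each x > 0
  have support : ∀ x : ℝ, 0 < x → ∃ m : ℝ,
      ∀ t ∈ Ici (0:ℝ), D t ≤ C * D x + m * (t - x) := by
    intro x hx
    set S : Set ℝ := {r | ∃ v, x < v ∧ r = (D v - C * D x) / (v - x)} with hS
    have hne : S.Nonempty := ⟨_, x + 1, by linarith, rfl⟩
    have hub : ∀ r ∈ S, r ≤ (C * D x - D 0) / x := by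
      rintro r ⟨v, hv, rfl⟩
      rw [div_le_div_iff₀ (by linarith) hx]
      have := cross x 0 v le_rfl hx hv
      nlinarith [this]
    have hbdd : BddAbove S := ⟨_, hub⟩
    refine ⟨sSup S, ?_⟩
    intro t ht
    simp only [mem_Ici] at ht
    rcases lt_trichotomy t x with h | h | h
    · have hle : sSup S ≤ (C * D x - D t) / (x - t) := by
        apply csSup_le hne
        rintro r ⟨v, hv, rfl⟩
        rw [div_le_div_iff₀ (by linarith) (by linarith)]
        exact cross x t v ht h hv
      have h2 : sSup S * (x - t) ≤ C * D x - D t :=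
        (le_div_iff₀ (by linarith : (0:ℝ) < x - t)).mp hle
      nlinarith [h2]
    · subst h
      have := hDnonneg t (by simp [ht])
      nlinarith [this]
    · have hmem : (D t - C * D x) / (t - x) ∈ S := ⟨t, h, rfl⟩
      have h2 : (D t - C * D x) / (t - x) ≤ sSup S := le_csSup hbdd hmem
      have h3 : D t - C * D x ≤ sSup S * (t - x) :=
        (div_le_iff₀ (by linarith : (0:ℝ) < t - x)).mp h2
      linarith
  -- the set of affine majorants
  set A : Set (ℝ × ℝ) := {p | ∀ t ∈ Ici (0:ℝ), D t ≤ p.1 * t + p.2} with hA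
  have hmemA : ∀ x : ℝ, 0 < x → ∀ m : ℝ,
      (∀ t ∈ Ici (0:ℝ), D t ≤ C * D x + m * (t - x)) → (m, C * D x - m * x) ∈ A := by
    intro x hx m hm
    intro t ht
    have h1 := hm t ht
    show D t ≤ m * t + (C * D x - m * x)
    have heq : C * D x + m * (t - x) = m * t + (C * D x - m * x) := by ring
    linarith [h1, heq.le, heq.ge]
  obtain ⟨m1, hm1⟩ := support 1 one_pos
  have hAne : A.Nonempty := ⟨_, hmemA 1 one_pos m1 hm1⟩
  -- the envelope
  set E : ℝ → ℝ := fun x => sInf ((fun p : ℝ × ℝ => p.1 * x + p.2) '' A) with hE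
  have hEne : ∀ x : ℝ, ((fun p : ℝ × ℝ => p.1 * x + p.2) '' A).Nonempty :=
    fun x => hAne.image _
  have hElb : ∀ x ∈ Ici (0:ℝ), D x ∈ lowerBounds ((fun p : ℝ × ℝ => p.1 * x + p.2) '' A) := by
    rintro x hx y ⟨p, hp, rfl⟩
    exact hp x hx
  have hDleE : ∀ x ∈ Ici (0:ℝ), D x ≤ E x :=
    fun x hx => le_csInf (hEne x) (hElb x hx)
  have hEle : ∀ p ∈ A, ∀ x ∈ Ici (0:ℝ), E x ≤ p.1 * x + p.2 := by
    intro p hp x hx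
    exact csInf_le ⟨D x, hElb x hx⟩ ⟨p, hp, rfl⟩
  have hEleC : ∀ x : ℝ, 0 < x → E x ≤ C * D x := by
    intro x hx
    obtain ⟨m, hm⟩ := support x hx
    have hmem := hmemA x hx m hm
    have h1 : E x ≤ m * x + (C * D x - m * x) := hEle _ hmem x (le_of_lt hx)
    linarith
  have hEconc : ∀ x ∈ Ici (0:ℝ), ∀ y ∈ Ici (0:ℝ), ∀ a b : ℝ, 0 ≤ a → 0 ≤ b → a + b = 1 →
      a * E x + b * E y ≤ E (a * x + b * y) := by
    intro x hx y hy a b ha hb hab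
    apply le_csInf (hEne _)
    rintro z ⟨p, hp, rfl⟩
    show a * E x + b * E y ≤ p.1 * (a * x + b * y) + p.2
    have h1 := hEle p hp x hx
    have h2 := hEle p hp y hy
    have h3 := mul_le_mul_of_nonneg_left h1 ha
    have h4 := mul_le_mul_of_nonneg_left h2 hb
    have heq : a * (p.1 * x + p.2) + b * (p.1 * y + p.2)
        = p.1 * (a * x + b * y) + (a + b) * p.2 := by ring
    rw [hab, one_mul] at heq
    linarith [h3, h4, heq.le, heq.ge]
  -- the sandwiching functions
  set D₂ : ℝ → ℝ := fun x => if x = 0 then D 0 else E x with hD₂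
  have hD₂0 : D₂ 0 = D 0 := if_pos rfl
  have hD₂ne : ∀ z : ℝ, z ≠ 0 → D₂ z = E z := fun z h => if_neg h
  have h0mem : (0:ℝ) ∈ Ici (0:ℝ) := self_mem_Ici
  have hD2leE : ∀ z ∈ Ici (0:ℝ), D₂ z ≤ E z := by
    intro z hz
    by_cases h : z = 0
    · subst h; rw [hD₂0]; exact hDleE 0 h0mem
    · rw [hD₂ne z h]
  have hDleD2 : ∀ z ∈ Ici (0:ℝ), D z ≤ D₂ z := by
    intro z hz
    by_cases h : z = 0
    · subst h; rw [hD₂0]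
    · rw [hD₂ne z h]; exact hDleE z hz
  have hD2leCD : ∀ z ∈ Ici (0:ℝ), D₂ z ≤ C * D z := by
    intro z hz
    by_cases h : z = 0
    · subst h; rw [hD₂0]; nlinarith [hDnonneg 0 h0mem]
    · rw [hD₂ne z h]
      exact hEleC z (lt_of_le_of_ne hz (Ne.symm h))
  have hD2conc : ConcaveOn ℝ (Ici 0) D₂ := by
    refine ⟨convex_Ici 0, ?_⟩
    intro x hx y hy a b ha hb hab
    simp only [smul_eq_mul, mem_Ici] at *
    by_cases hz : a * x + b * y = 0
    · have hax : a * x = 0 := by nlinarith [mul_nonneg ha hx, mul_nonneg hb hy]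
      have hby : b * y = 0 := by nlinarith [mul_nonneg ha hx, mul_nonneg hb hy]
      have hval : D₂ (a * x + b * y) = D 0 := by rw [hz, hD₂0]
      have h1 : a * D₂ x ≤ a * D 0 := by
        rcases mul_eq_zero.mp hax with h | h
        · simp [h]
        · subst h; rw [hD₂0]
      have h2 : b * D₂ y ≤ b * D 0 := by
        rcases mul_eq_zero.mp hby with h | h
        · simp [h]
        · subst h; rw [hD₂0]
      have hsum : a * D 0 + b * D 0 = D 0 := by rw [← add_mul, hab, one_mul]
      rw [hval]
      linarith
    · have hval : D₂ (a * x + b * y) = E (a * x + b * y) := hD₂ne _ hz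
      have h1 := hD2leE x hx
      have h2 := hD2leE y hy
      have h3 := hEconc x hx y hy a b ha hb hab
      rw [hval]
      nlinarith [mul_le_mul_of_nonneg_left h1 ha, mul_le_mul_of_nonneg_left h2 hb]
  refine ⟨fun x => C⁻¹ * D₂ x, D₂, C, hC, ?_, hD2conc, ?_, ?_, ?_⟩
  · refine ⟨convex_Ici 0, ?_⟩
    intro x hx y hy a b ha hb hab
    simp only [smul_eq_mul]
    have hcc := hD2conc.2 hx hy ha hb hab
    simp only [smul_eq_mul] at hcc
    have hCinv : (0:ℝ) ≤ C⁻¹ := inv_nonneg.mpr hC0.le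
    nlinarith [mul_le_mul_of_nonneg_left hcc hCinv]
  · intro t ht
    have h := le_trans (hDnonneg t ht) (hDleD2 t ht)
    positivity
  · intro t ht
    exact le_trans (hDnonneg t ht) (hDleD2 t ht)
  · intro t ht
    refine ⟨?_, hDleD2 t ht, ?_⟩
    · have h := hD2leCD t ht
      rw [inv_mul_le_iff₀ hC0]
      exact h
    · rw [← mul_assoc, mul_inv_cancel₀ hC0.ne', one_mul]
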